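/- Let R be a ring and suppose K is a class of R-modules closed under finite direct sums, pure submodules, and isomorphisms. If K is closed under pushouts of pure embeddings, then K is closed under pure epimorphic images: whenever 0 → A → B → C → 0 is a pure-exact sequence with B ∈ K, then C ∈ K. -/
import Mathlib


universe u v

/-- A submodule `A ≤ M` is pure if every finite system of `R`-linear equations with
parameters in `A` that is solvable in `M` is solvable in `A`. -/
def IsPureSubmodule (R : Type u) [Ring R] {M : Type v} [AddCommGroup M] [Module R M]
    (A : Submodule R M) : Prop :=
  ∀ (k n : ℕ) (c : Fin k → Fin n → R) (a : Fin k → M),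
    (∀ i, a i ∈ A) →
    (∃ x : Fin n → M, ∀ i, (∑ j, c i j • x j) = a i) →
    ∃ x : Fin n → M, (∀ j, x j ∈ A) ∧ ∀ i, (∑ j, c i j • x j) = a i

/-- A linear map is a pure embedding if it is injective and its range is a pure submodule. -/
def IsPureEmbedding (R : Type u) [Ring R] {M N : Type v} [AddCommGroup M] [Module R M]
    [AddCommGroup N] [Module R N] (f : M →ₗ[R] N) : Prop :=
  Function.Injective f ∧ IsPureSubmodule R (LinearMap.range f)

/-- A module is pure-injective if it is a direct summand of every module containing it
as a pure submodule, i.e. every pure embedding out of it admits a retraction. -/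
def IsPureInjective (R : Type u) [Ring R] (M : Type v) [AddCommGroup M] [Module R M] : Prop :=
  ∀ (N : Type v) [AddCommGroup N] [Module R N] (f : M →ₗ[R] N),
    IsPureEmbedding R f → ∃ g : N →ₗ[R] M, g ∘ₗ f = LinearMap.id

/-- A module is absolutely pure if it is pure in every module containing it. -/
def IsAbsolutelyPure (R : Type u) [Ring R] (M : Type v) [AddCommGroup M] [Module R M] : Prop :=
  ∀ (N : Type v) [AddCommGroup N] [Module R N] (f : M →ₗ[R] N),
    Function.Injective f → IsPureSubmodule R (LinearMap.range f)

/-- a class of R-modules closed under finite direct sums, pure submodules,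
isomorphisms and pushouts of pure embeddings is closed under pure epimorphic images. -/
theorem stmt4 (R : Type u) [Ring R]
    (K : (M : Type u) → [AddCommGroup M] → [Module R M] → Prop)
    (hsum : ∀ (M N : Type u) [AddCommGroup M] [Module R M] [AddCommGroup N] [Module R N],
      K M → K N → K (M × N))
    (hpure : ∀ (M : Type u) [AddCommGroup M] [Module R M] (A : Submodule R M),
      K M → IsPureSubmodule R A → K A)
    (hiso : ∀ (M N : Type u) [AddCommGroup M] [Module R M] [AddCommGroup N] [Module R N],
      K M → (M ≃ₗ[R] N) → K N)
    (hpush : ∀ (M N₁ N₂ : Type u) [AddCommGroup M] [Module R M]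
      [AddCommGroup N₁] [Module R N₁] [AddCommGroup N₂] [Module R N₂]
      (f₁ : M →ₗ[R] N₁) (f₂ : M →ₗ[R] N₂),
      IsPureEmbedding R f₁ → IsPureEmbedding R f₂ → K M → K N₁ → K N₂ →
      K ((N₁ × N₂) ⧸ LinearMap.range (f₁.prod (-f₂))))
    (A B C : Type u) [AddCommGroup A] [Module R A] [AddCommGroup B] [Module R B]
    [AddCommGroup C] [Module R C]
    (i : A →ₗ[R] B) (p : B →ₗ[R] C)
    (hi : Function.Injective i) (hp : Function.Surjective p)
    (hexact : LinearMap.range i = LinearMap.ker p)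
    (hpureseq : IsPureSubmodule R (LinearMap.range i))
    (hB : K B) :
    K C := by
  classical
  have hKA : K A := hiso _ _ (hpure B _ hB hpureseq) (LinearEquiv.ofInjective i hi).symm
  have hKP := hpush A B B i i ⟨hi, hpureseq⟩ ⟨hi, hpureseq⟩ hKA hB hB
  set S : Submodule R (B × B) := LinearMap.range (i.prod (-i)) with hS
  let δ : B →ₗ[R] ((B × B) ⧸ S) := S.mkQ.comp (LinearMap.id.prod (-LinearMap.id))
  have hδapp : ∀ b : B, δ b = Submodule.Quotient.mk (b, -b) := fun b => rfl
  have hδker : ∀ a : A, δ (i a) = 0 := by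
    intro a
    rw [hδapp, Submodule.Quotient.mk_eq_zero]
    exact ⟨a, by simp [LinearMap.prod_apply]⟩
  have hcond : S ≤ LinearMap.ker (p.comp (LinearMap.fst R B B)) := by
    rintro ⟨b₁, b₂⟩ ⟨a, ha⟩
    have h1 : i a = b₁ := congrArg Prod.fst ha
    have : b₁ ∈ LinearMap.ker p := by
      rw [← hexact]; exact ⟨a, h1⟩
    simpa [LinearMap.mem_ker] using this
  let ρ : ((B × B) ⧸ S) →ₗ[R] C := S.liftQ (p.comp (LinearMap.fst R B B)) hcond
  have hρδ : ∀ b : B, ρ (δ b) = p b := by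
    intro b
    rw [hδapp]
    simp [ρ, Submodule.liftQ_apply]
  have hTpure : IsPureSubmodule R (LinearMap.range δ) := by
    intro k n c a ha hsol
    obtain ⟨x, hx⟩ := hsol
    choose b hb using ha
    let s : C → B := Function.surjInv hp
    have hs : ∀ cc, p (s cc) = cc := fun cc => Function.surjInv_eq hp cc
    refine ⟨fun j => δ (s (ρ (x j))), fun j => ⟨_, rfl⟩, fun l => ?_⟩
    have h1 : p (∑ j, c l j • s (ρ (x j))) = p (b l) := by
      calc p (∑ j, c l j • s (ρ (x j))) = ∑ j, c l j • ρ (x j) := by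
            simp [map_sum, map_smul, hs]
        _ = ρ (∑ j, c l j • x j) := by simp [map_sum, map_smul]
        _ = ρ (a l) := by rw [hx l]
        _ = p (b l) := by rw [← hb l, hρδ]
    have h2 : (∑ j, c l j • s (ρ (x j))) - b l ∈ LinearMap.ker p := by
      simp [LinearMap.mem_ker, map_sub, h1]
    rw [← hexact] at h2
    obtain ⟨a', ha'⟩ := h2
    have h3 : δ ((∑ j, c l j • s (ρ (x j))) - b l) = 0 := by rw [← ha']; exact hδker a'
    rw [map_sub, sub_eq_zero] at h3
    calc ∑ j, c l j • δ (s (ρ (x j))) = δ (∑ j, c l j • s (ρ (x j))) := by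
          simp [map_sum, map_smul]
      _ = δ (b l) := h3
      _ = a l := hb l
  have hKT : K (LinearMap.range δ) := hpure _ _ hKP hTpure
  have hker : LinearMap.ker δ = LinearMap.ker p := by
    ext b
    constructor
    · intro hbk
      have : (b, -b) ∈ S := by
        rw [← Submodule.Quotient.mk_eq_zero]
        exact hbk
      obtain ⟨a, ha⟩ := this
      have h1 : i a = b := congrArg Prod.fst ha
      rw [← hexact]
      exact ⟨a, h1⟩
    · intro hbk
      rw [← hexact] at hbk
      obtain ⟨a, ha⟩ := hbk
      show δ b = 0
      rw [← ha]
      exact hδker a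
  have e : (LinearMap.range δ : Type u) ≃ₗ[R] C :=
    δ.quotKerEquivRange.symm ≪≫ₗ Submodule.quotEquivOfEq _ _ hker ≪≫ₗ
      p.quotKerEquivOfSurjective hp
  exact hiso _ _ hKT e
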